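/- Let λ > 0, 0 < d_H ≤ λ/2, 0 < d_V ≤ λ/2, and integers N_H ≥ 2, N_V ≥ 2, and set N = N_H N_V. Define grid positions u_n = (0, i(n) d_H, j(n) d_V) ∈ ℝ³ for n = 1, …, N, where i(n) = (n−1) mod N_H and j(n) = ⌊(n−1)/N_H⌋. Then the N × N matrix R with entries [R]_{n,m} = sinc(2‖u_n − u_m‖/λ) is not the identity matrix; that is, there exist indices n ≠ m with sinc(2‖u_n − u_m‖/λ) ≠ 0. -/

import Mathlib

open Real

/-- The normalized sinc function: `sinc x = sin(π x)/(π x)` for `x ≠ 0`, `sinc 0 = 1`. -/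
noncomputable def sinc (x : ℝ) : ℝ :=
  if x = 0 then 1 else Real.sin (Real.pi * x) / (Real.pi * x)

/-- Position of the `n`-th RIS element (`n = 1, …, N`, indexed row by row) on a
rectangular grid in the `x = 0` plane of `ℝ³`, with horizontal spacing `dH`,
vertical spacing `dV` and `NH` elements per row:
`u n = (0, ((n−1) mod NH) dH, (⌊(n−1)/NH⌋) dV)`. -/
noncomputable def risPos (dH dV : ℝ) (NH : ℕ) (n : ℕ) : EuclideanSpace ℝ (Fin 3) :=
  (WithLp.equiv 2 (Fin 3 → ℝ)).symm
    ![0, (((n - 1) % NH : ℕ) : ℝ) * dH, (((n - 1) / NH : ℕ) : ℝ) * dV]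

lemma norm_risPos_sub (dH dV : ℝ) (NH n m : ℕ) :
    ‖risPos dH dV NH n - risPos dH dV NH m‖ =
      Real.sqrt (((((n-1) % NH : ℕ) : ℝ) * dH - (((m-1) % NH : ℕ) : ℝ) * dH)^2
        + ((((n-1) / NH : ℕ) : ℝ) * dV - (((m-1) / NH : ℕ) : ℝ) * dV)^2) := by
  rw [EuclideanSpace.norm_eq]
  congr 1
  simp [risPos, Fin.sum_univ_three, sq_abs]

lemma sinc_pos_of {x : ℝ} (h0 : 0 < x) (h1 : x < 1) : _root_.sinc x ≠ 0 := by
  have hx : x ≠ 0 := ne_of_gt h0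
  have hs : 0 < Real.sin (Real.pi * x) :=
    Real.sin_pos_of_pos_of_lt_pi (by positivity)
      (by nlinarith [Real.pi_pos])
  simp only [_root_.sinc, if_neg hx]
  positivity

lemma sinc_irrational {x : ℝ} (h : Irrational x) : _root_.sinc x ≠ 0 := by
  have hx : x ≠ 0 := by simpa using h.ne_int 0
  simp only [_root_.sinc, if_neg hx]
  refine div_ne_zero ?_ (mul_ne_zero Real.pi_ne_zero hx)
  intro hs
  rw [Real.sin_eq_zero_iff] at hs
  obtain ⟨k, hk⟩ := hs
  have hx2 : x = (k : ℝ) := by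
    have hpi := Real.pi_ne_zero
    have : (k : ℝ) * Real.pi = Real.pi * x := hk
    nlinarith [Real.pi_pos, sq_nonneg (x - (k:ℝ))]
  exact h.ne_int k hx2

/-- For any rectangular RIS with sub-half-wavelength spacings
`0 < d_H ≤ λ/2`, `0 < d_V ≤ λ/2` and at least two rows and two columns, the
spatial correlation matrix `[R]_{n,m} = sinc(2‖u_n − u_m‖/λ)` is not the
identity: there exist distinct indices `n ≠ m` in `{1, …, N}` with
`sinc(2‖u_n − u_m‖/λ) ≠ 0`. -/
theorem stmt_6 (lam dH dV : ℝ) (NH NV : ℕ)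
    (hlam : 0 < lam) (hdH : 0 < dH) (hdH' : dH ≤ lam / 2)
    (hdV : 0 < dV) (hdV' : dV ≤ lam / 2) (hNH : 2 ≤ NH) (hNV : 2 ≤ NV) :
    ∃ n m : ℕ, 1 ≤ n ∧ n ≤ NH * NV ∧ 1 ≤ m ∧ m ≤ NH * NV ∧ n ≠ m ∧
      _root_.sinc (2 * ‖risPos dH dV NH n - risPos dH dV NH m‖ / lam) ≠ 0 := by
  have hN4 : 4 ≤ NH * NV := le_trans (by norm_num) (Nat.mul_le_mul hNH hNV)
  have hNH2 : 2 * NH ≤ NH * NV := by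
    calc 2 * NH = NH * 2 := Nat.mul_comm 2 NH
    _ ≤ NH * NV := Nat.mul_le_mul_left NH hNV
  rcases lt_or_eq_of_le hdH' with hH | hH
  · -- dH < lam/2 : use n=1, m=2
    refine ⟨1, 2, le_refl 1, by omega, by omega, by omega, by omega, ?_⟩
    have hnorm : ‖risPos dH dV NH 1 - risPos dH dV NH 2‖ = dH := by
      have e1 : (((2 - 1) % NH : ℕ) : ℝ) = 1 := by
        rw [Nat.mod_eq_of_lt (by omega)]; norm_num
      have e2 : (((2 - 1) / NH : ℕ) : ℝ) = 0 := by
        rw [Nat.div_eq_of_lt (by omega)]; norm_num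
      rw [norm_risPos_sub, e1, e2]
      norm_num
      exact Real.sqrt_sq hdH.le
    rw [hnorm]
    exact sinc_pos_of (by positivity) (by rw [div_lt_one hlam]; linarith)
  · rcases lt_or_eq_of_le hdV' with hV | hV
    · -- dH = lam/2, dV < lam/2 : use n=1, m=NH+1
      refine ⟨1, NH + 1, le_refl 1, by omega, by omega, by omega, by omega, ?_⟩
      have hnorm : ‖risPos dH dV NH 1 - risPos dH dV NH (NH + 1)‖ = dV := by
        have e1 : (((NH + 1 - 1) % NH : ℕ) : ℝ) = 0 := by simp
        have e2 : (((NH + 1 - 1) / NH : ℕ) : ℝ) = 1 := by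
          rw [Nat.add_sub_cancel, Nat.div_self (by omega : 0 < NH)]; norm_num
        rw [norm_risPos_sub, e1, e2]
        norm_num
        exact Real.sqrt_sq hdV.le
      rw [hnorm]
      exact sinc_pos_of (by positivity) (by rw [div_lt_one hlam]; linarith)
    · -- dH = dV = lam/2 : use n=1, m=NH+2, argument is √2
      refine ⟨1, NH + 2, le_refl 1, by omega, by omega, by omega, by omega, ?_⟩
      have hnorm : ‖risPos dH dV NH 1 - risPos dH dV NH (NH + 2)‖
          = Real.sqrt (dH ^ 2 + dV ^ 2) := by
        have e1 : (((NH + 2 - 1) % NH : ℕ) : ℝ) = 1 := by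
          rw [show NH + 2 - 1 = NH + 1 from by omega, Nat.add_mod_left,
            Nat.mod_eq_of_lt (by omega)]; norm_num
        have e2 : (((NH + 2 - 1) / NH : ℕ) : ℝ) = 1 := by
          rw [show NH + 2 - 1 = NH + 1 from by omega,
            Nat.add_div_left _ (by omega : 0 < NH),
            Nat.div_eq_of_lt (by omega)]; norm_num
        rw [norm_risPos_sub, e1, e2]
        norm_num
      rw [hnorm]
      have harg : 2 * Real.sqrt (dH ^ 2 + dV ^ 2) / lam = Real.sqrt 2 := by
        have hd : dH ^ 2 + dV ^ 2 = (lam / 2) ^ 2 * 2 := by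
          rw [hH, hV]; ring
        rw [hd, Real.sqrt_mul (by positivity), Real.sqrt_sq (by positivity)]
        field_simp
      rw [harg]
      exact sinc_irrational irrational_sqrt_two
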